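/- Let q, a, b be real numbers with q > 0 and a, b > 1, and let x ∈ (0,1). Define ψ(p) = ( Φ_{p,q}(a,b;x) / ((1+a)^p (1+b)^q) − x/(1−x) ) · (x−1)/(p x) for p > 0. Then ψ is logarithmically convex on (0,∞); that is, for all p₁, p₂ > 0 and α ∈ (0,1), ψ(α p₁ + (1−α) p₂) ≤ ψ(p₁)^α ψ(p₂)^{1−α}. -/

import Mathlib

open Real Set

/-- The generalized polylogarithm with real parameters. -/
noncomputable def genPolylogR (p q a b x : ℝ) : ℝ :=
  ∑' k : ℕ, ((1 + a) ^ p * (1 + b) ^ q /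
      (((k : ℝ) + 1 + a) ^ p * ((k : ℝ) + 1 + b) ^ q)) * x ^ (k + 1)

/-- The function `ψ(p)` built from the generalized polylogarithm. -/
noncomputable def psiFun (q a b x : ℝ) (p : ℝ) : ℝ :=
  (genPolylogR p q a b x / ((1 + a) ^ p * (1 + b) ^ q) - x / (1 - x)) * (x - 1) / (p * x)

private noncomputable def fAux (L D p : ℝ) : ℝ :=
  Real.log (1 - D * Real.exp (-(L * p))) - Real.log p

private noncomputable def gAux (L D p : ℝ) : ℝ :=
  D * L * Real.exp (-(L * p)) / (1 - D * Real.exp (-(L * p))) - p⁻¹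

lemma upos {L D p : ℝ} (hL : 0 < L) (hD0 : 0 < D) (hD1 : D ≤ 1) (hp : 0 < p) :
    0 < 1 - D * Real.exp (-(L * p)) := by
  have h1 : Real.exp (-(L * p)) < 1 := Real.exp_lt_one_iff.mpr (by nlinarith)
  nlinarith [Real.exp_pos (-(L * p))]

lemma hasDerivAt_fAux {L D p : ℝ} (hL : 0 < L) (hD0 : 0 < D) (hD1 : D ≤ 1) (hp : 0 < p) :
    HasDerivAt (fAux L D) (gAux L D p) p := by
  have hu := upos hL hD0 hD1 hp
  have he : HasDerivAt (fun y : ℝ => Real.exp (-(L * y)))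
      (Real.exp (-(L * p)) * -(L * 1)) p := (((hasDerivAt_id p).const_mul L).neg).exp
  have hU : HasDerivAt (fun y : ℝ => 1 - D * Real.exp (-(L * y)))
      (-(D * (Real.exp (-(L * p)) * -(L * 1)))) p := (he.const_mul D).const_sub 1
  have h1 := hU.log (ne_of_gt hu)
  have h2 := Real.hasDerivAt_log (ne_of_gt hp)
  have := h1.sub h2
  refine this.congr_deriv ?_
  unfold gAux
  ring

lemma hasDerivAt_gAux {L D p : ℝ} (hL : 0 < L) (hD0 : 0 < D) (hD1 : D ≤ 1) (hp : 0 < p) :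
    HasDerivAt (gAux L D)
      ((p ^ 2)⁻¹ - D * L ^ 2 * Real.exp (-(L * p)) / (1 - D * Real.exp (-(L * p))) ^ 2) p := by
  have hu := upos hL hD0 hD1 hp
  have he : HasDerivAt (fun y : ℝ => Real.exp (-(L * y)))
      (Real.exp (-(L * p)) * -(L * 1)) p := (((hasDerivAt_id p).const_mul L).neg).exp
  have hN : HasDerivAt (fun y : ℝ => D * L * Real.exp (-(L * y)))
      ((D * L) * (Real.exp (-(L * p)) * -(L * 1))) p := he.const_mul (D * L)
  have hU : HasDerivAt (fun y : ℝ => 1 - D * Real.exp (-(L * y)))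
      (-(D * (Real.exp (-(L * p)) * -(L * 1)))) p := (he.const_mul D).const_sub 1
  have hdiv := hN.div hU (ne_of_gt hu)
  have hinv := hasDerivAt_inv (ne_of_gt hp)
  have := hdiv.sub hinv
  refine this.congr_deriv ?_
  ring


lemma keyIneq {D t : ℝ} (hD0 : 0 < D) (hD1 : D ≤ 1) (ht : 0 < t) :
    D * t ^ 2 * Real.exp (-t) ≤ (1 - D * Real.exp (-t)) ^ 2 := by
  have h1 : t ≤ Real.exp (t/2) - Real.exp (-(t/2)) := by
    have := (Real.self_le_sinh_iff.mpr (by linarith : (0:ℝ) ≤ t/2))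
    rw [Real.sinh_eq] at this
    linarith
  have hesq : Real.exp (-t) = Real.exp (-(t/2)) ^ 2 := by
    rw [sq, ← Real.exp_add]; ring_nf
  have he2 : Real.exp (t/2) * Real.exp (-(t/2)) = 1 := by
    rw [← Real.exp_add]; norm_num
  have h2 : t * Real.exp (-(t/2)) ≤ 1 - Real.exp (-t) := by
    have := mul_le_mul_of_nonneg_right h1 (Real.exp_pos (-(t/2))).le
    calc t * Real.exp (-(t/2)) ≤ (Real.exp (t/2) - Real.exp (-(t/2))) * Real.exp (-(t/2)) := this
      _ = 1 - Real.exp (-t) := by rw [sub_mul, he2, hesq]; ring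
  have h3 : 1 - Real.exp (-t) ≤ 1 - D * Real.exp (-t) := by
    nlinarith [Real.exp_pos (-t)]
  have h4 : 0 ≤ t * Real.exp (-(t/2)) := by positivity
  have h5 : (t * Real.exp (-(t/2))) ^ 2 ≤ (1 - D * Real.exp (-t)) ^ 2 :=
    pow_le_pow_left₀ h4 (h2.trans h3) 2
  calc D * t ^ 2 * Real.exp (-t) ≤ 1 * t ^ 2 * Real.exp (-t) := by
        nlinarith [Real.exp_pos (-t), sq_nonneg t]
    _ = (t * Real.exp (-(t/2))) ^ 2 := by rw [hesq]; ring
    _ ≤ _ := h5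

lemma convexOn_fAux {L D : ℝ} (hL : 0 < L) (hD0 : 0 < D) (hD1 : D ≤ 1) :
    ConvexOn ℝ (Set.Ioi 0) (fAux L D) := by
  have hderiv : ∀ p ∈ Set.Ioi (0:ℝ), deriv (fAux L D) p = gAux L D p := fun p hp =>
    (hasDerivAt_fAux hL hD0 hD1 hp).deriv
  have hmem : ∀ p : ℝ, p ∈ Set.Ioi (0:ℝ) → deriv (fAux L D) =ᶠ[nhds p] gAux L D := by
    intro p hp
    filter_upwards [Ioi_mem_nhds hp] with y hy using hderiv y hy
  apply convexOn_of_deriv2_nonneg (convex_Ioi 0)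
  · intro p hp
    exact (hasDerivAt_fAux hL hD0 hD1 hp).continuousAt.continuousWithinAt
  · rw [interior_Ioi]
    intro p hp
    exact (hasDerivAt_fAux hL hD0 hD1 hp).differentiableAt.differentiableWithinAt
  · rw [interior_Ioi]
    intro p hp
    exact (((hasDerivAt_gAux hL hD0 hD1 hp).differentiableAt).congr_of_eventuallyEq
      (hmem p hp)).differentiableWithinAt
  · rw [interior_Ioi]
    intro p hp
    have heq : deriv^[2] (fAux L D) p = deriv (gAux L D) p := by
      simp only [Function.iterate_succ, Function.iterate_zero, Function.comp_apply, id]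
      exact Filter.EventuallyEq.deriv_eq (hmem p hp)
    rw [heq, (hasDerivAt_gAux hL hD0 hD1 hp).deriv]
    have hu := upos hL hD0 hD1 hp
    have hkey := keyIneq hD0 hD1 (mul_pos hL hp)
    rw [sub_nonneg, div_le_iff₀ (pow_pos hu 2)]
    rw [inv_mul_eq_div, le_div_iff₀ (pow_pos hp 2)]
    calc D * L ^ 2 * Real.exp (-(L * p)) * p ^ 2
        = D * (L*p) ^ 2 * Real.exp (-(L * p)) := by ring
      _ ≤ (1 - D * Real.exp (-(L * p))) ^ 2 := hkey

lemma hIneq {L D p₁ p₂ α : ℝ} (hL : 0 < L) (hD0 : 0 < D) (hD1 : D ≤ 1)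
    (hp₁ : 0 < p₁) (hp₂ : 0 < p₂) (hα : α ∈ Set.Ioo (0:ℝ) 1) :
    (1 - D * Real.exp (-(L * (α * p₁ + (1 - α) * p₂)))) / (α * p₁ + (1 - α) * p₂) ≤
      ((1 - D * Real.exp (-(L * p₁))) / p₁) ^ α *
        ((1 - D * Real.exp (-(L * p₂))) / p₂) ^ (1 - α) := by
  obtain ⟨hα0, hα1⟩ := hα
  have hp₃ : 0 < α * p₁ + (1 - α) * p₂ := by nlinarith
  have hpos : ∀ p : ℝ, 0 < p → 0 < (1 - D * Real.exp (-(L * p))) / p := fun p hp =>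
    div_pos (upos hL hD0 hD1 hp) hp
  have hlog : ∀ p : ℝ, 0 < p → fAux L D p = Real.log ((1 - D * Real.exp (-(L * p))) / p) :=
    fun p hp => (Real.log_div (ne_of_gt (upos hL hD0 hD1 hp)) (ne_of_gt hp)).symm
  have hconv := (convexOn_fAux hL hD0 hD1).2 (Set.mem_Ioi.mpr hp₁) (Set.mem_Ioi.mpr hp₂)
    hα0.le (by linarith : (0:ℝ) ≤ 1 - α) (by ring)
  simp only [smul_eq_mul] at hconv
  rw [hlog _ hp₃, hlog _ hp₁, hlog _ hp₂] at hconv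
  calc (1 - D * Real.exp (-(L * (α * p₁ + (1 - α) * p₂)))) / (α * p₁ + (1 - α) * p₂)
      = Real.exp (Real.log ((1 - D * Real.exp (-(L * (α * p₁ + (1 - α) * p₂)))) /
          (α * p₁ + (1 - α) * p₂))) := (Real.exp_log (hpos _ hp₃)).symm
    _ ≤ Real.exp (α * Real.log ((1 - D * Real.exp (-(L * p₁))) / p₁) +
          (1 - α) * Real.log ((1 - D * Real.exp (-(L * p₂))) / p₂)) :=
        Real.exp_le_exp.mpr hconv
    _ = _ := by
        rw [Real.exp_add, Real.rpow_def_of_pos (hpos _ hp₁), Real.rpow_def_of_pos (hpos _ hp₂)]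
        ring_nf

noncomputable def TAux (q a b x p : ℝ) (k : ℕ) : ℝ :=
  x ^ (k + 1) * ((1 - ((k:ℝ) + 1 + a) ^ (-p) * ((k:ℝ) + 1 + b) ^ (-q)) / p)

section bounds

variable {q a b x p : ℝ}

lemma TAux_nonneg (hq : 0 < q) (ha : 1 < a) (hb : 1 < b) (hx0 : 0 < x) (hp : 0 < p) (k : ℕ) :
    0 ≤ TAux q a b x p k := by
  have hc : (1:ℝ) ≤ (k:ℝ) + 1 + a := by
    have := Nat.cast_nonneg (α := ℝ) k; linarith
  have hd : (1:ℝ) ≤ (k:ℝ) + 1 + b := by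
    have := Nat.cast_nonneg (α := ℝ) k; linarith
  have h1 : ((k:ℝ) + 1 + a) ^ (-p) ≤ 1 :=
    Real.rpow_le_one_of_one_le_of_nonpos hc (by linarith)
  have h2 : ((k:ℝ) + 1 + b) ^ (-q) ≤ 1 :=
    Real.rpow_le_one_of_one_le_of_nonpos hd (by linarith)
  have h1' : 0 < ((k:ℝ) + 1 + a) ^ (-p) := Real.rpow_pos_of_pos (by linarith) _
  have h2' : 0 < ((k:ℝ) + 1 + b) ^ (-q) := Real.rpow_pos_of_pos (by linarith) _
  have : ((k:ℝ) + 1 + a) ^ (-p) * ((k:ℝ) + 1 + b) ^ (-q) ≤ 1 :=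
    mul_le_one₀ h1 h2'.le h2
  have hX : 0 ≤ x ^ (k+1) := by positivity
  apply mul_nonneg hX
  apply div_nonneg (by linarith) hp.le

lemma TAux_le (hq : 0 < q) (ha : 1 < a) (hb : 1 < b) (hx0 : 0 < x) (hp : 0 < p) (k : ℕ) :
    TAux q a b x p k ≤ x ^ (k + 1) * (1 / p) := by
  have hc : (0:ℝ) < (k:ℝ) + 1 + a := by
    have := Nat.cast_nonneg (α := ℝ) k; linarith
  have hd : (0:ℝ) < (k:ℝ) + 1 + b := by
    have := Nat.cast_nonneg (α := ℝ) k; linarith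
  have h1' : 0 < ((k:ℝ) + 1 + a) ^ (-p) := Real.rpow_pos_of_pos hc _
  have h2' : 0 < ((k:ℝ) + 1 + b) ^ (-q) := Real.rpow_pos_of_pos hd _
  have hX : 0 ≤ x ^ (k+1) := by positivity
  apply mul_le_mul_of_nonneg_left _ hX
  gcongr
  nlinarith

lemma summable_geom_shift (hx0 : 0 < x) (hx1 : x < 1) :
    Summable (fun k : ℕ => x ^ (k + 1)) := by
  have h := summable_geometric_of_lt_one hx0.le hx1
  exact (Summable.congr (h.mul_right x) (fun k => (pow_succ x k).symm))

lemma summable_TAux (hq : 0 < q) (ha : 1 < a) (hb : 1 < b) (hx0 : 0 < x) (hx1 : x < 1)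
    (hp : 0 < p) : Summable (TAux q a b x p) := by
  apply Summable.of_nonneg_of_le (TAux_nonneg hq ha hb hx0 hp) (TAux_le hq ha hb hx0 hp)
  exact (summable_geom_shift hx0 hx1).mul_right _

lemma psi_eq (hq : 0 < q) (ha : 1 < a) (hb : 1 < b) (hx0 : 0 < x) (hx1 : x < 1) (hp : 0 < p) :
    psiFun q a b x p = ((1 - x) / x) * ∑' k, TAux q a b x p k := by
  have hN : 0 < (1 + a) ^ p * (1 + b) ^ q :=
    mul_pos (Real.rpow_pos_of_pos (by linarith) _) (Real.rpow_pos_of_pos (by linarith) _)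
  set w : ℕ → ℝ := fun k =>
    ((k:ℝ) + 1 + a) ^ (-p) * ((k:ℝ) + 1 + b) ^ (-q) * x ^ (k + 1) with hw
  have hwk : ∀ k : ℕ, ((1 + a) ^ p * (1 + b) ^ q /
      (((k : ℝ) + 1 + a) ^ p * ((k : ℝ) + 1 + b) ^ q)) * x ^ (k + 1)
      = ((1 + a) ^ p * (1 + b) ^ q) * w k := by
    intro k
    have hc : (0:ℝ) < (k:ℝ) + 1 + a := by
      have := Nat.cast_nonneg (α := ℝ) k; linarith
    have hd : (0:ℝ) < (k:ℝ) + 1 + b := by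
      have := Nat.cast_nonneg (α := ℝ) k; linarith
    simp only [hw]
    rw [Real.rpow_neg hc.le, Real.rpow_neg hd.le]
    ring
  have hgen : genPolylogR p q a b x = ((1 + a) ^ p * (1 + b) ^ q) * ∑' k, w k := by
    rw [genPolylogR, tsum_congr hwk, tsum_mul_left]
  have hw_nonneg : ∀ k, 0 ≤ w k := by
    intro k
    have hc : (0:ℝ) < (k:ℝ) + 1 + a := by
      have := Nat.cast_nonneg (α := ℝ) k; linarith
    have hd : (0:ℝ) < (k:ℝ) + 1 + b := by
      have := Nat.cast_nonneg (α := ℝ) k; linarith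
    have := Real.rpow_pos_of_pos hc (-p)
    have := Real.rpow_pos_of_pos hd (-q)
    positivity
  have hw_le : ∀ k, w k ≤ x ^ (k + 1) := by
    intro k
    have hc : (1:ℝ) ≤ (k:ℝ) + 1 + a := by
      have := Nat.cast_nonneg (α := ℝ) k; linarith
    have hd : (1:ℝ) ≤ (k:ℝ) + 1 + b := by
      have := Nat.cast_nonneg (α := ℝ) k; linarith
    have h1 : ((k:ℝ) + 1 + a) ^ (-p) ≤ 1 :=
      Real.rpow_le_one_of_one_le_of_nonpos hc (by linarith)
    have h2 : ((k:ℝ) + 1 + b) ^ (-q) ≤ 1 :=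
      Real.rpow_le_one_of_one_le_of_nonpos hd (by linarith)
    have h1' : 0 < ((k:ℝ) + 1 + a) ^ (-p) := Real.rpow_pos_of_pos (by linarith) _
    have h2' : 0 < ((k:ℝ) + 1 + b) ^ (-q) := Real.rpow_pos_of_pos (by linarith) _
    have hX : 0 ≤ x ^ (k+1) := by positivity
    have hAB : ((k:ℝ) + 1 + a) ^ (-p) * ((k:ℝ) + 1 + b) ^ (-q) ≤ 1 :=
      mul_le_one₀ h1 h2'.le h2
    have := mul_le_mul_of_nonneg_right hAB hX
    simp only [hw]
    nlinarith
  have hv_sum : Summable (fun k : ℕ => x ^ (k + 1)) := summable_geom_shift hx0 hx1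
  have hw_sum : Summable w := Summable.of_nonneg_of_le hw_nonneg hw_le hv_sum
  have hgeo : ∑' k : ℕ, x ^ (k + 1) = x / (1 - x) := by
    have h := tsum_geometric_of_lt_one hx0.le hx1
    calc ∑' k : ℕ, x ^ (k + 1) = ∑' k : ℕ, x ^ k * x := tsum_congr fun k => pow_succ x k
      _ = (∑' k : ℕ, x ^ k) * x := tsum_mul_right
      _ = (1 - x)⁻¹ * x := by rw [h]
      _ = x / (1 - x) := by rw [div_eq_inv_mul]
  have hdiff : genPolylogR p q a b x / ((1 + a) ^ p * (1 + b) ^ q) - x / (1 - x)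
      = ∑' k, (w k - x ^ (k + 1)) := by
    rw [hgen, mul_div_cancel_left₀ _ (ne_of_gt hN), ← hgeo, (Summable.tsum_sub hw_sum hv_sum).symm]
  rw [psiFun, hdiff, mul_div_assoc, ← tsum_mul_right]
  rw [← tsum_mul_left]
  apply tsum_congr
  intro k
  rw [hw, TAux]
  field_simp
  ring

end bounds

section termwise
variable {q a b x p p₁ p₂ α : ℝ}

lemma TAux_rewrite (hq : 0 < q) (ha : 1 < a) (hb : 1 < b) (hp : 0 < p) (k : ℕ) :
    TAux q a b x p k = x ^ (k + 1) *
      ((1 - ((k:ℝ) + 1 + b) ^ (-q) *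
        Real.exp (-(Real.log ((k:ℝ) + 1 + a) * p))) / p) := by
  have hc : (1:ℝ) < (k:ℝ) + 1 + a := by
    have := Nat.cast_nonneg (α := ℝ) k; linarith
  rw [TAux, Real.rpow_def_of_pos (by linarith), mul_neg]
  ring

lemma TAux_rpow_le (hq : 0 < q) (ha : 1 < a) (hb : 1 < b) (hx0 : 0 < x) (hx1 : x < 1)
    (hp₁ : 0 < p₁) (hp₂ : 0 < p₂) (hα : α ∈ Set.Ioo (0:ℝ) 1) (k : ℕ) :
    TAux q a b x (α * p₁ + (1 - α) * p₂) k ≤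
      (TAux q a b x p₁ k) ^ α * (TAux q a b x p₂ k) ^ (1 - α) := by
  obtain ⟨hα0, hα1⟩ := hα
  have hc : (1:ℝ) < (k:ℝ) + 1 + a := by
    have := Nat.cast_nonneg (α := ℝ) k; linarith
  have hd : (1:ℝ) < (k:ℝ) + 1 + b := by
    have := Nat.cast_nonneg (α := ℝ) k; linarith
  set L : ℝ := Real.log ((k:ℝ) + 1 + a) with hLdef
  set D : ℝ := ((k:ℝ) + 1 + b) ^ (-q) with hDdef
  have hL : 0 < L := Real.log_pos hc
  have hD0 : 0 < D := Real.rpow_pos_of_pos (by linarith) _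
  have hD1 : D ≤ 1 := Real.rpow_le_one_of_one_le_of_nonpos hd.le (by linarith)
  have hp₃ : 0 < α * p₁ + (1 - α) * p₂ := by nlinarith
  have hX : 0 < x ^ (k + 1) := by positivity
  set h : ℝ → ℝ := fun p => (1 - D * Real.exp (-(L * p))) / p with hhdef
  have hT : ∀ p : ℝ, 0 < p → TAux q a b x p k = x ^ (k + 1) * h p := fun p hp =>
    TAux_rewrite hq ha hb hp k
  have hhpos : ∀ p : ℝ, 0 < p → 0 < h p := fun p hp =>
    div_pos (upos hL hD0 hD1 hp) hp
  have hmain : h (α * p₁ + (1 - α) * p₂) ≤ h p₁ ^ α * h p₂ ^ (1 - α) :=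
    hIneq hL hD0 hD1 hp₁ hp₂ ⟨hα0, hα1⟩
  rw [hT _ hp₃, hT _ hp₁, hT _ hp₂]
  have hXsplit : (x ^ (k + 1) * h p₁) ^ α * (x ^ (k + 1) * h p₂) ^ (1 - α)
      = x ^ (k + 1) * (h p₁ ^ α * h p₂ ^ (1 - α)) := by
    rw [Real.mul_rpow hX.le (hhpos _ hp₁).le, Real.mul_rpow hX.le (hhpos _ hp₂).le]
    have : (x ^ (k + 1)) ^ α * (x ^ (k + 1)) ^ (1 - α) = x ^ (k + 1) := by
      rw [← Real.rpow_add hX]; norm_num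
    calc (x ^ (k+1)) ^ α * h p₁ ^ α * ((x ^ (k+1)) ^ (1-α) * h p₂ ^ (1-α))
        = ((x ^ (k+1)) ^ α * (x ^ (k+1)) ^ (1-α)) * (h p₁ ^ α * h p₂ ^ (1-α)) := by ring
      _ = x ^ (k + 1) * (h p₁ ^ α * h p₂ ^ (1 - α)) := by rw [this]
  rw [hXsplit]
  exact mul_le_mul_of_nonneg_left hmain hX.le

end termwise

theorem psi_log_convex
    (q a b x : ℝ) (hq : 0 < q) (ha : 1 < a) (hb : 1 < b) (hx : x ∈ Set.Ioo (0 : ℝ) 1) :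
    ∀ p₁ p₂ : ℝ, 0 < p₁ → 0 < p₂ → ∀ α ∈ Set.Ioo (0 : ℝ) 1,
      psiFun q a b x (α * p₁ + (1 - α) * p₂) ≤
        (psiFun q a b x p₁) ^ α * (psiFun q a b x p₂) ^ (1 - α) := by
  obtain ⟨hx0, hx1⟩ := hx
  intro p₁ p₂ hp₁ hp₂ α hα
  obtain ⟨hα0, hα1⟩ := hα
  have hα1' : 0 < 1 - α := by linarith
  have hp₃ : 0 < α * p₁ + (1 - α) * p₂ := by nlinarith
  set T₁ := TAux q a b x p₁ with hT₁
  set T₂ := TAux q a b x p₂ with hT₂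
  set T₃ := TAux q a b x (α * p₁ + (1 - α) * p₂) with hT₃
  have hT₁s : Summable T₁ := summable_TAux hq ha hb hx0 hx1 hp₁
  have hT₂s : Summable T₂ := summable_TAux hq ha hb hx0 hx1 hp₂
  have hT₃s : Summable T₃ := summable_TAux hq ha hb hx0 hx1 hp₃
  have hT₁n : ∀ k, 0 ≤ T₁ k := TAux_nonneg hq ha hb hx0 hp₁
  have hT₂n : ∀ k, 0 ≤ T₂ k := TAux_nonneg hq ha hb hx0 hp₂
  have hT₃n : ∀ k, 0 ≤ T₃ k := TAux_nonneg hq ha hb hx0 hp₃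
  -- Hölder
  have hpq : Real.HolderConjugate (1/α) (1/(1-α)) := by
    rw [Real.holderConjugate_iff]; constructor
    · rw [lt_div_iff₀ hα0]; linarith
    · rw [one_div, one_div, inv_inv, inv_inv]; ring
  have hf : ∀ k, (0:ℝ) ≤ T₁ k ^ α := fun k => Real.rpow_nonneg (hT₁n k) _
  have hg : ∀ k, (0:ℝ) ≤ T₂ k ^ (1-α) := fun k => Real.rpow_nonneg (hT₂n k) _
  have hfp : ∀ k, (T₁ k ^ α) ^ (1/α) = T₁ k := by
    intro k
    rw [← Real.rpow_mul (hT₁n k), mul_one_div_cancel (ne_of_gt hα0), Real.rpow_one]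
  have hgq : ∀ k, (T₂ k ^ (1-α)) ^ (1/(1-α)) = T₂ k := by
    intro k
    rw [← Real.rpow_mul (hT₂n k), mul_one_div_cancel (ne_of_gt hα1'), Real.rpow_one]
  have hf_sum : Summable fun k => (T₁ k ^ α) ^ (1/α) := hT₁s.congr fun k => (hfp k).symm
  have hg_sum : Summable fun k => (T₂ k ^ (1-α)) ^ (1/(1-α)) :=
    hT₂s.congr fun k => (hgq k).symm
  obtain ⟨hprod_sum, hholder⟩ :=
    summable_and_inner_le_Lp_mul_Lq_tsum_of_nonneg hpq hf hg hf_sum hg_sum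
  have hS3 : ∑' k, T₃ k ≤ (∑' k, T₁ k) ^ α * (∑' k, T₂ k) ^ (1 - α) := by
    have h1 : ∑' k, T₃ k ≤ ∑' k, T₁ k ^ α * T₂ k ^ (1-α) := by
      apply Summable.tsum_le_tsum _ hT₃s hprod_sum
      exact TAux_rpow_le hq ha hb hx0 hx1 hp₁ hp₂ ⟨hα0, hα1⟩
    have h2 : (∑' k, (T₁ k ^ α) ^ (1/α)) = ∑' k, T₁ k := tsum_congr hfp
    have h3 : (∑' k, (T₂ k ^ (1-α)) ^ (1/(1-α))) = ∑' k, T₂ k := tsum_congr hgq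
    have h4 : (1:ℝ) / (1/α) = α := by rw [one_div_one_div]
    have h5 : (1:ℝ) / (1/(1-α)) = 1-α := by rw [one_div_one_div]
    rw [h2, h3, h4, h5] at hholder
    exact h1.trans hholder
  -- assemble
  have hC : 0 < (1 - x) / x := div_pos (by linarith) hx0
  have hS₁n : 0 ≤ ∑' k, T₁ k := tsum_nonneg hT₁n
  have hS₂n : 0 ≤ ∑' k, T₂ k := tsum_nonneg hT₂n
  rw [psi_eq hq ha hb hx0 hx1 hp₃, psi_eq hq ha hb hx0 hx1 hp₁, psi_eq hq ha hb hx0 hx1 hp₂]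
  have hCsplit : ((1-x)/x * ∑' k, T₁ k) ^ α * ((1-x)/x * ∑' k, T₂ k) ^ (1-α)
      = (1-x)/x * ((∑' k, T₁ k) ^ α * (∑' k, T₂ k) ^ (1-α)) := by
    rw [Real.mul_rpow hC.le hS₁n, Real.mul_rpow hC.le hS₂n]
    have : ((1-x)/x) ^ α * ((1-x)/x) ^ (1-α) = (1-x)/x := by
      rw [← Real.rpow_add hC]; norm_num
    calc ((1-x)/x) ^ α * (∑' k, T₁ k) ^ α * (((1-x)/x) ^ (1-α) * (∑' k, T₂ k) ^ (1-α))
        = (((1-x)/x) ^ α * ((1-x)/x) ^ (1-α)) * ((∑' k, T₁ k) ^ α * (∑' k, T₂ k) ^ (1-α)) := by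
          ring
      _ = _ := by rw [this]
  rw [hCsplit]
  exact mul_le_mul_of_nonneg_left hS3 hC.le
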